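/- arXiv:2012.14592 — 5 statements merged into one kernel-verified Lean document; each statement's English description precedes it below -/
import Mathlib

section
/- Let T be an implementation (a Moore machine with inputs 2^I and outputs 2^O), φ a specification, and k ∈ ℕ. If for every environment E of size at most k the composed trace of T and E belongs to φ (i.e., T ⊨_E φ for all E with |E| ≤ k), then T is a k-lasso-precise implementation of φ (i.e., T ⊨_{k,I} φ). -/
/-- The ultimately periodic word `u · v^ω` induced by the lasso `(u, v)`. -/
def lassoWord {A : Type*} (u v : List A) (hv : v ≠ []) : ℕ → A :=
  fun n =>
    if h : n < u.length then u[n]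
    else v[(n - u.length) % v.length]'(Nat.mod_lt _ (List.length_pos_iff.mpr hv))

/-- An implementation: a Moore machine with inputs `2^I` and outputs `2^O`. -/
structure Impl (I O : Type*) where
  S : Type
  [instFin : Fintype S]
  t0 : S
  tr : S → (I → Bool) → S
  out : S → (O → Bool)

attribute [instance] Impl.instFin

/-- An environment: a Moore machine with inputs `2^O` and outputs `2^I`. -/
structure Env (I O : Type*) where
  S : Type
  [instFin : Fintype S]
  s0 : S
  rho : S → (O → Bool) → S
  inp : S → (I → Bool)

attribute [instance] Env.instFin

/-- The run of an implementation on an input sequence. -/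
def Impl.run {I O : Type*} (T : Impl I O) (ι : ℕ → I → Bool) : ℕ → T.S
  | 0 => T.t0
  | n + 1 => T.tr (T.run ι n) (ι n)

/-- The trace of an implementation on an input sequence. -/
def Impl.trace {I O : Type*} (T : Impl I O) (ι : ℕ → I → Bool) :
    ℕ → (I → Bool) × (O → Bool) :=
  fun n => (ι n, T.out (T.run ι n))

/-- The joint run of an implementation composed with an environment:
`t₀ = t0`, `s₀ = s0`, `t_{n+1} = τ(t_n, ι_E(s_n))`, `s_{n+1} = ρ(s_n, o(t_{n+1}))`. -/
def compRun {I O : Type*} (T : Impl I O) (E : Env I O) : ℕ → T.S × E.S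
  | 0 => (T.t0, E.s0)
  | n + 1 =>
    let p := compRun T E n
    let t' := T.tr p.1 (E.inp p.2)
    (t', E.rho p.2 (T.out t'))

/-- The composed trace of an implementation and an environment. -/
def compTrace {I O : Type*} (T : Impl I O) (E : Env I O) :
    ℕ → (I → Bool) × (O → Bool) :=
  fun n => (E.inp (compRun T E n).2, T.out (compRun T E n).1)

/-- `T ⊨_E φ`: the composed trace of `T` and `E` satisfies `φ`. -/
def SatEnv {I O : Type*} (T : Impl I O) (E : Env I O)
    (φ : Set (ℕ → (I → Bool) × (O → Bool))) : Prop :=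
  compTrace T E ∈ φ

/-- `T ⊨_{k,I} φ`: the trace of `T` on every input sequence representable
by a lasso of length `k` satisfies `φ`. -/
def LassoPrecise {I O : Type*} (T : Impl I O) (k : ℕ)
    (φ : Set (ℕ → (I → Bool) × (O → Bool))) : Prop :=
  ∀ ι : ℕ → I → Bool,
    (∃ (u v : List (I → Bool)) (hv : v ≠ []),
      u.length + v.length = k ∧ ι = lassoWord u v hv) →
    T.trace ι ∈ φ

/-- State index in the canonical lasso automaton at time `n`. -/
def fVal (lu lv n : ℕ) : ℕ := if n < lu then n else lu + (n - lu) % lv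

lemma fVal_lt (lu lv n : ℕ) (h : 0 < lv) : fVal lu lv n < lu + lv := by
  have := Nat.mod_lt (n - lu) h
  unfold fVal; split <;> omega

lemma fVal_succ (lu lv n : ℕ) (h : 0 < lv) :
    fVal lu lv (n + 1) = if fVal lu lv n + 1 < lu + lv then fVal lu lv n + 1 else lu := by
  unfold fVal
  have hm := Nat.mod_lt (n - lu) h
  by_cases h1 : n < lu
  · by_cases h2 : n + 1 < lu
    · simp only [if_pos h1, if_pos h2]
      rw [if_pos (by omega)]
    · have hnl : n + 1 = lu := by omega
      simp only [if_pos h1, if_neg h2]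
      rw [if_pos (by omega)]
      have : n + 1 - lu = 0 := by omega
      rw [this, Nat.zero_mod]
      omega
  · have h2 : ¬ n + 1 < lu := by omega
    simp only [if_neg h1, if_neg h2]
    have hs : n + 1 - lu = (n - lu) + 1 := by omega
    have hkey : (n - lu + 1) % lv = ((n - lu) % lv + 1) % lv := by
      conv_lhs => rw [← Nat.mod_add_div (n - lu) lv]
      rw [Nat.add_right_comm, Nat.add_mul_mod_self_left]
    rw [hs, hkey]
    by_cases h3 : (n - lu) % lv + 1 < lv
    · rw [if_pos (by omega), Nat.mod_eq_of_lt h3]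
      omega
    · rw [if_neg (by omega)]
      have he : (n - lu) % lv + 1 = lv := by omega
      rw [he, Nat.mod_self]
      omega

lemma lassoWord_fVal {A : Type*} (u v : List A) (hv : v ≠ []) (n : ℕ) :
    lassoWord u v hv (fVal u.length v.length n) = lassoWord u v hv n := by
  have hvpos : 0 < v.length := List.length_pos_iff.mpr hv
  have hm := Nat.mod_lt (n - u.length) hvpos
  unfold fVal
  by_cases h1 : n < u.length
  · rw [if_pos h1]
  · rw [if_neg h1]
    unfold lassoWord
    rw [dif_neg (show ¬ u.length + (n - u.length) % v.length < u.length by omega),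
        dif_neg h1]
    simp [Nat.add_sub_cancel_left, Nat.mod_eq_of_lt hm]

theorem stmt2 {I O : Type*} (T : Impl I O)
    (φ : Set (ℕ → (I → Bool) × (O → Bool))) (k : ℕ)
    (h : ∀ E : Env I O, Fintype.card E.S ≤ k → SatEnv T E φ) :
    LassoPrecise T k φ := by
  rintro ι ⟨u, v, hv, hk, rfl⟩
  have hvpos : 0 < v.length := List.length_pos_iff.mpr hv
  set K := u.length + v.length with hK
  have hKpos : 0 < K := by omega
  let E : Env I O :=
    { S := Fin K
      s0 := ⟨0, hKpos⟩
      rho := fun s _ => if h2 : s.val + 1 < K then ⟨s.val + 1, h2⟩ else ⟨u.length, by omega⟩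
      inp := fun s => lassoWord u v hv s.val }
  have hcard : Fintype.card E.S ≤ k := by
    simpa [E] using hk.le
  have key : ∀ n, (compRun T E n).1 = T.run (lassoWord u v hv) n ∧
      ((compRun T E n).2 : ℕ) = fVal u.length v.length n := by
    intro n
    induction n with
    | zero =>
      refine ⟨rfl, ?_⟩
      show (0 : ℕ) = fVal u.length v.length 0
      unfold fVal
      rcases Nat.eq_zero_or_pos u.length with h0 | h0
      · rw [if_neg (by omega), h0]
        simp
      · rw [if_pos h0]
    | succ n ih =>
      obtain ⟨ih1, ih2⟩ := ih
      have hinp : E.inp (compRun T E n).2 = lassoWord u v hv n := by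
        show lassoWord u v hv ((compRun T E n).2 : ℕ) = _
        rw [ih2, lassoWord_fVal]
      constructor
      · show T.tr (compRun T E n).1 (E.inp (compRun T E n).2) = _
        rw [hinp, ih1]; rfl
      · show ((E.rho (compRun T E n).2
            (T.out (T.tr (compRun T E n).1 (E.inp (compRun T E n).2))) : Fin K) : ℕ) = _
        rw [fVal_succ _ _ _ hvpos, ← ih2]
        by_cases h2 : ((compRun T E n).2 : ℕ) + 1 < K
        · rw [← hK, if_pos h2]; simp only [E, dif_pos h2]
        · rw [← hK, if_neg h2]; simp only [E, dif_neg h2]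
  have htr : compTrace T E = T.trace (lassoWord u v hv) := by
    funext n
    obtain ⟨k1, k2⟩ := key n
    unfold compTrace Impl.trace
    rw [k1]
    congr 1
    show lassoWord u v hv ((compRun T E n).2 : ℕ) = _
    rw [k2, lassoWord_fVal]
  have := h E hcard
  unfold SatEnv at this
  rwa [htr] at this
end

section
/- Let T be an implementation (a Moore machine with inputs 2^I and outputs 2^O) with |T| states, φ a specification, and k ∈ ℕ. If T is a (k·|T|)-lasso-precise implementation of φ (i.e., T ⊨_{k·|T|,I} φ), then for every environment E of size at most k the composed trace of T and E belongs to φ (i.e., T ⊨_E φ). -/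
theorem stmt3 {I O : Type*} (T : Impl I O)
    (φ : Set (ℕ → (I → Bool) × (O → Bool))) (k : ℕ)
    (h : LassoPrecise T (k * Fintype.card T.S) φ) :
    ∀ E : Env I O, Fintype.card E.S ≤ k → SatEnv T E φ := by
  intro E hE
  set N := k * Fintype.card T.S with hN
  set ι : ℕ → I → Bool := fun n => E.inp (compRun T E n).2 with hι
  -- pigeonhole: two equal joint states among indices 0..N
  have hcard : Fintype.card (T.S × E.S) ≤ N := by
    rw [Fintype.card_prod]
    calc Fintype.card T.S * Fintype.card E.S ≤ Fintype.card T.S * k :=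
          Nat.mul_le_mul_left _ hE
      _ = N := Nat.mul_comm _ _
  have hninj : ¬ Function.Injective (fun m : Fin (N + 1) => compRun T E m.val) := by
    intro hinj
    have := Fintype.card_le_of_injective _ hinj
    simp only [Fintype.card_fin] at this
    omega
  rw [Function.not_injective_iff] at hninj
  obtain ⟨x, y, hxy, hne⟩ := hninj
  -- wlog x < y : get i < j ≤ N with equal states
  obtain ⟨i, j, hij, hjN, heq⟩ : ∃ i j : ℕ, i < j ∧ j ≤ N ∧
      compRun T E i = compRun T E j := by
    rcases lt_or_gt_of_ne (Fin.val_ne_of_ne hne) with hlt | hlt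
    · exact ⟨x, y, hlt, Nat.lt_succ_iff.mp y.isLt, hxy⟩
    · exact ⟨y, x, hlt, Nat.lt_succ_iff.mp x.isLt, hxy.symm⟩
  set b := j - i with hb
  have hb1 : 1 ≤ b := by omega
  -- periodicity of the joint run
  have hper : ∀ m : ℕ, compRun T E (i + m) = compRun T E (j + m) := by
    intro m
    induction m with
    | zero => simpa using heq
    | succ m ih =>
      have h1 : i + (m + 1) = (i + m) + 1 := by omega
      have h2 : j + (m + 1) = (j + m) + 1 := by omega
      rw [h1, h2]
      simp [compRun, ih]
  have hperb : ∀ n, i ≤ n → compRun T E (n + b) = compRun T E n := by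
    intro n hn
    obtain ⟨m, rfl⟩ := Nat.exists_eq_add_of_le hn
    have : i + m + b = j + m := by omega
    rw [this, ← hper]
  set a := N - b with ha
  have haN : a + b = N := by omega
  have hia : i ≤ a := by omega
  -- periodicity of ι beyond a, iterated
  have hiter : ∀ t n, a ≤ n → compRun T E (n + b * t) = compRun T E n := by
    intro t
    induction t with
    | zero => simp
    | succ t ih =>
      intro n hn
      have : n + b * (t + 1) = (n + b * t) + b := by ring
      rw [this, hperb _ (by omega), ih n hn]
  have hιper : ∀ n, a ≤ n → ι n = ι (a + (n - a) % b) := by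
    intro n hn
    have hdm : a + (n - a) % b + b * ((n - a) / b) = n := by
      have := Nat.mod_add_div (n - a) b
      omega
    have := hiter ((n - a) / b) (a + (n - a) % b) (by omega)
    rw [hdm] at this
    rw [hι]
    simp only
    rw [← this]
  -- build the lasso
  set u : List (I → Bool) := (List.range a).map ι with hu
  set v : List (I → Bool) := (List.range b).map (fun m => ι (a + m)) with hv
  have hul : u.length = a := by simp [hu]
  have hvl : v.length = b := by simp [hv]
  have hvne : v ≠ [] := by
    intro hc
    have := congrArg List.length hc
    simp [hvl] at this
    omega
  have hιeq : ι = lassoWord u v hvne := by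
    funext n
    unfold lassoWord
    by_cases hna : n < a
    · rw [dif_pos (by omega : n < u.length)]
      simp [hu]
    · rw [dif_neg (by omega : ¬ n < u.length)]
      have h1 := hιper n (by omega)
      rw [h1]
      simp [hv, hul, hvl, Nat.mod_lt _ (by omega : 0 < b)]
  have htr := h ι ⟨u, v, hvne, by rw [hul, hvl]; omega, hιeq⟩
  -- the composed trace equals T.trace ι
  have hrun : ∀ n, T.run ι n = (compRun T E n).1 := by
    intro n
    induction n with
    | zero => rfl
    | succ n ih => rw [Impl.run, ih]; simp [compRun, hι]
  have hct : compTrace T E = T.trace ι := by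
    funext n
    exact Prod.ext rfl (by simp [compTrace, Impl.trace, hrun])
  unfold SatEnv
  rw [hct]
  exact htr
end

section
/- For every finite set AP of atomic propositions, every subset I ⊆ AP, and every bound k ∈ ℕ, there exists a deterministic finite automaton A_k over the alphabet Σ = 2^AP whose number of states is at most (2^|I| + 1)^k · (k+1)^k and whose accepted language is exactly the set of finite words over Σ that are prefixes of some infinite word whose I-projection is representable by a lasso of length k; that is, L(A_k) = {w ∈ Σ* | ∃ σ ∈ L_k^I(Σ^ω), w < σ}. -/
/-- The projection of an infinite word over `2^AP` onto the propositions in `I`. -/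
def projI {AP : Type*} (I : Set AP) (σ : ℕ → AP → Bool) : ℕ → (I → Bool) :=
  fun n i => σ n i

/-- The finite word `w` is a prefix of the infinite word `σ`. -/
def IsPrefixOf {A : Type*} (w : List A) (σ : ℕ → A) : Prop :=
  ∀ (i : ℕ) (h : i < w.length), w[i] = σ i

/-- `L_k^I(Σ^ω)`: infinite words over `2^AP` whose `I`-projection is representable
by a lasso of length `k` over `2^I`. -/
def LassoLangI {AP : Type*} (I : Set AP) (k : ℕ) : Set (ℕ → AP → Bool) :=
  {σ | ∃ (u v : List (I → Bool)) (hv : v ≠ []),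
    u.length + v.length = k ∧ projI I σ = lassoWord u v hv}

namespace Stmt4Aux

/-- periodic index: for split point `j`, the position in `[j,k)` that position `n` maps to. -/
def idx (k : ℕ) (j : Fin k) (n : ℕ) : ℕ := j + (n - j) % (k - j)

lemma idx_lt (k : ℕ) (j : Fin k) (n : ℕ) : idx k j n < k := by
  have hj := j.2
  have h1 : (n - (j : ℕ)) % (k - j) < k - (j : ℕ) := Nat.mod_lt _ (by omega)
  unfold idx; omega

lemma idx_of_lt (k : ℕ) (j : Fin k) {n : ℕ} (hjn : (j : ℕ) ≤ n) (hn : n < k) :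
    idx k j n = n := by
  have : (n - (j : ℕ)) % (k - j) = n - j := Nat.mod_eq_of_lt (by omega)
  unfold idx; omega

lemma idx_k (k : ℕ) (j : Fin k) : idx k j k = j := by
  unfold idx; simp

private lemma succ_mod (s m : ℕ) (hm0 : 0 < m) :
    (s + 1) % m = if s % m + 1 = m then 0 else s % m + 1 := by
  have hsm : s % m < m := Nat.mod_lt _ hm0
  conv_lhs => rw [← Nat.mod_add_div s m]
  rw [show s % m + m * (s / m) + 1 = s % m + 1 + m * (s / m) by ring,
    Nat.add_mul_mod_self_left]
  split
  · simp [*]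
  · exact Nat.mod_eq_of_lt (by omega)

lemma idx_succ (k : ℕ) (j : Fin k) {n : ℕ} (hn : (j : ℕ) ≤ n) :
    idx k j (n + 1) = if idx k j n + 1 < k then idx k j n + 1 else j := by
  have hj := j.2
  have hm0 : 0 < k - (j : ℕ) := by omega
  have hs1 : n + 1 - (j : ℕ) = (n - (j : ℕ)) + 1 := by omega
  have hsm : (n - (j : ℕ)) % (k - (j : ℕ)) < k - (j : ℕ) := Nat.mod_lt _ hm0
  unfold idx
  rw [hs1, succ_mod _ _ hm0]
  split <;> split <;> omega


variable {A : Type*} {C : Type} [DecidableEq C] (p : A → C) (k : ℕ)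

def fill (s1 : Fin k → Option C) : ℕ :=
  (Finset.univ.filter fun j : Fin k => (s1 j).isSome).card

def M : DFA A ((Fin k → Option C) × (Fin k → Option (Fin k))) where
  step s a :=
    if h : fill k s.1 < k then
      (Function.update s.1 ⟨fill k s.1, h⟩ (some (p a)), fun j => some j)
    else
      (s.1, fun j => (s.2 j).bind fun q =>
        if s.1 q = some (p a) then
          some (if h2 : (q : ℕ) + 1 < k then ⟨(q : ℕ) + 1, h2⟩ else j)
        else none)
  start := (fun _ => none, fun j => some j)
  accept := {s | fill k s.1 < k ∨ ∃ j, s.2 j ≠ none}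

def Pw (w : List A) : Fin k → Option C := fun j =>
  if h : (j : ℕ) < w.length then some (p w[(j : ℕ)]) else none

def alive (w : List A) (j : Fin k) : Prop :=
  ∀ (i : ℕ) (h : i < w.length) (hki : k ≤ i),
    p w[i] = p (w[idx k j i]'((idx_lt k j i).trans_le (hki.trans h.le)))

open Classical in
noncomputable def Fw (w : List A) : Fin k → Option (Fin k) := fun j =>
  if w.length < k then some j
  else if alive p k w j then some ⟨idx k j w.length, idx_lt k j _⟩ else none

lemma card_filter_lt (m : ℕ) :
    (Finset.univ.filter fun j : Fin k => (j : ℕ) < m).card = min m k := by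
  rw [show min m k = (Finset.range (min m k)).card by simp]
  refine Finset.card_bij (fun (a : Fin k) _ => (a : ℕ)) ?_ ?_ ?_
  · intro a ha
    simp only [Finset.mem_filter] at ha
    simp [Nat.lt_min, ha.2, a.2]
  · intro a _ b _ h; exact Fin.val_injective h
  · intro b hb
    simp only [Finset.mem_range, Nat.lt_min] at hb
    exact ⟨⟨b, hb.2⟩, by simp [hb.1], rfl⟩

lemma fill_Pw (w : List A) : fill k (Pw p k w) = min w.length k := by
  unfold fill
  rw [Finset.filter_congr (q := fun j : Fin k => (j : ℕ) < w.length)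
    (fun j _ => by unfold Pw; split <;> simp_all)]
  exact card_filter_lt k w.length

lemma alive_of_append {w : List A} {a : A} {j : Fin k} (hw : k ≤ w.length)
    (h : alive p k (w ++ [a]) j) : alive p k w j := by
  intro i hi hki
  have h1 := h i (by simp; omega) hki
  have hidx : idx k j i < w.length := (idx_lt k j i).trans_le hw
  rwa [List.getElem_append_left hi, List.getElem_append_left hidx] at h1

lemma eval_eq (w : List A) : (M p k).eval w = (Pw p k w, Fw p k w) := by
  induction w using List.reverseRecOn with
  | nil =>
    rw [DFA.eval_nil]
    refine Prod.ext ?_ ?_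
    · funext j
      simp [M, Pw]
    · funext j
      have hj := j.2
      simp only [M, Fw]
      rw [if_pos (by simp; omega)]
  | append_singleton w a ih =>
    rw [DFA.eval_append_singleton, ih]
    have hlen : (w ++ [a]).length = w.length + 1 := by simp
    by_cases hlt : w.length < k
    · -- fill branch
      have hfill : fill k (Pw p k w) = w.length := by rw [fill_Pw]; omega
      show (if h : fill k (Pw p k w) < k then _ else _) = _
      rw [dif_pos (show fill k (Pw p k w) < k by omega)]
      refine Prod.ext ?_ ?_
      · funext j
        simp only
        rw [Function.update_apply]
        by_cases hje : j = ⟨fill k (Pw p k w), by omega⟩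
        · have hj1 : (j : ℕ) = w.length := by rw [hje]; simp [hfill]
          rw [if_pos hje]
          unfold Pw
          rw [dif_pos (show (j : ℕ) < (w ++ [a]).length by rw [hlen]; omega)]
          have hcat : (w ++ [a])[(j : ℕ)]'(by rw [hlen]; omega) = a :=
            List.getElem_concat_length (l := w) (a := a) hj1 _
          rw [hcat]
        · rw [if_neg hje]
          have hjne : (j : ℕ) ≠ w.length := by
            intro hc
            exact hje (Fin.ext (by simp [hfill, hc]))
          unfold Pw
          by_cases hjw : (j : ℕ) < w.length
          · rw [dif_pos hjw, dif_pos (show (j : ℕ) < (w ++ [a]).length by rw [hlen]; omega)]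
            rw [List.getElem_append_left hjw]
          · rw [dif_neg hjw, dif_neg (show ¬ (j : ℕ) < (w ++ [a]).length by rw [hlen]; omega)]
      · funext j
        simp only
        unfold Fw
        by_cases h2 : (w ++ [a]).length < k
        · rw [if_pos h2]
        · have hk2 : w.length + 1 = k := by omega
          have hal2 : alive p k (w ++ [a]) j :=
            fun i hi hki => absurd hki (by rw [hlen] at hi; omega)
          rw [if_neg h2, if_pos hal2]
          refine congrArg some (Fin.ext ?_)
          show (j : ℕ) = idx k j (w ++ [a]).length
          rw [hlen, hk2, idx_k]
    · -- periodic branch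
      have hkw : k ≤ w.length := by omega
      have hfill : fill k (Pw p k w) = k := by rw [fill_Pw]; omega
      show (if h : fill k (Pw p k w) < k then _ else _) = _
      rw [dif_neg (by omega)]
      refine Prod.ext ?_ ?_
      · funext j
        have hj := j.2
        simp only
        unfold Pw
        rw [dif_pos (show (j : ℕ) < w.length by omega),
          dif_pos (show (j : ℕ) < (w ++ [a]).length by rw [hlen]; omega)]
        rw [List.getElem_append_left (show (j : ℕ) < w.length by omega)]
      · funext j
        have hj := j.2
        simp only
        unfold Fw
        rw [if_neg (show ¬ w.length < k by omega),
          if_neg (show ¬ (w ++ [a]).length < k by rw [hlen]; omega)]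
        have hidxw : idx k j w.length < w.length := (idx_lt k j _).trans_le hkw
        by_cases hal : alive p k w j
        · rw [if_pos hal]
          rw [Option.bind_some]
          have hPq : Pw p k w ⟨idx k j w.length, idx_lt k j _⟩
              = some (p (w[idx k j w.length]'hidxw)) := by
            unfold Pw
            rw [dif_pos (show ((⟨idx k j w.length, idx_lt k j _⟩ : Fin k) : ℕ) < w.length
              from hidxw)]
          simp only [hPq]
          by_cases heq : p (w[idx k j w.length]'hidxw) = p a
          · have halive : alive p k (w ++ [a]) j := by
              intro i hi hki
              rw [hlen] at hi
              have hidxi : idx k j i < w.length := (idx_lt k j i).trans_le hkw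
              rcases Nat.lt_or_ge i w.length with hiw | hiw
              · rw [List.getElem_append_left hiw, List.getElem_append_left hidxi]
                exact hal i hiw hki
              · have hieq : i = w.length := by omega
                subst hieq
                rw [List.getElem_concat_length (l := w) (a := a) rfl,
                  List.getElem_append_left hidxi]
                exact heq.symm
            rw [if_pos (congrArg some heq), if_pos halive]
            refine congrArg some (Fin.ext ?_)
            show _ = idx k j (w ++ [a]).length
            rw [hlen, idx_succ k j (le_trans (le_of_lt hj) hkw)]
            split <;> rfl
          · rw [if_neg (fun hc => heq (Option.some_injective _ hc))]
            have hnal : ¬ alive p k (w ++ [a]) j := by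
              intro hc
              have h1 := hc w.length (by omega) hkw
              have hidxi : idx k j w.length < w.length := hidxw
              rw [List.getElem_concat_length (l := w) (a := a) rfl,
                List.getElem_append_left hidxi] at h1
              exact heq h1.symm
            rw [if_neg hnal]
        · rw [if_neg hal]
          rw [Option.bind_none, if_neg (fun hc => hal (alive_of_append p k hkw hc))]



set_option linter.unusedSectionVars false

lemma mem_accepts_iff (w : List A) :
    w ∈ (M p k).accepts ↔ (w.length < k ∨ ∃ j : Fin k, alive p k w j) := by
  rw [DFA.mem_accepts, eval_eq]
  show (fill k (Pw p k w) < k ∨ ∃ j, Fw p k w j ≠ none) ↔ _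
  rw [fill_Pw]
  rcases Nat.lt_or_ge w.length k with h | h
  · constructor
    · intro _; exact Or.inl h
    · intro _; left; omega
  · have hm : ¬ min w.length k < k := by omega
    simp only [hm, false_or]
    constructor
    · rintro ⟨j, hj⟩
      refine Or.inr ⟨j, ?_⟩
      unfold Fw at hj
      rw [if_neg (by omega)] at hj
      by_cases hal : alive p k w j
      · exact hal
      · rw [if_neg hal] at hj; exact absurd rfl hj
    · rintro (h1 | ⟨j, hj⟩)
      · omega
      · exact ⟨j, by unfold Fw; rw [if_neg (by omega), if_pos hj]; simp⟩

end Stmt4Aux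

section LangChar

open Stmt4Aux

variable {AP : Type*} (I : Set AP)

/-- projection of a single letter -/
def projL (a : AP → Bool) : I → Bool := fun i => a i

lemma lang_char [DecidablePred (· ∈ I)] (k : ℕ) (w : List (AP → Bool)) :
    (∃ σ ∈ LassoLangI I k, IsPrefixOf w σ) ↔
      (w.length < k ∨ ∃ j : Fin k, ∀ (i : ℕ) (h : i < w.length) (hki : k ≤ i),
        projL I w[i]
          = projL I (w[idx k j i]'((idx_lt k j i).trans_le (hki.trans h.le)))) := by
  constructor
  · rintro ⟨σ, ⟨u, v, hv, hkuv, hproj⟩, hpre⟩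
    have hv1 : 0 < v.length := List.length_pos_iff.mpr hv
    by_cases hw : w.length < k
    · exact Or.inl hw
    · right
      have hjk : u.length < k := by omega
      refine ⟨⟨u.length, hjk⟩, ?_⟩
      intro i hi hki
      have hπ : ∀ (n : ℕ) (hn : n < w.length), projL I w[n] = lassoWord u v hv n := by
        intro n hn
        funext ii
        have h1 : w[n] = σ n := hpre n hn
        have h2 := congrFun (congrFun hproj n) ii
        rw [show projL I (w[n]'hn) ii = σ n (ii : AP) by rw [h1]; rfl]
        exact h2
      have hidxlt : idx k ⟨u.length, hjk⟩ i < w.length :=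
        (idx_lt _ _ _).trans_le (hki.trans hi.le)
      rw [hπ i hi, hπ _ hidxlt]
      have hidxge : u.length ≤ idx k ⟨u.length, hjk⟩ i := Nat.le_add_right _ _
      unfold lassoWord
      rw [dif_neg (show ¬ i < u.length by omega),
        dif_neg (show ¬ idx k ⟨u.length, hjk⟩ i < u.length by omega)]
      have hveq : v.length = k - u.length := by omega
      have h1 : idx k ⟨u.length, hjk⟩ i - u.length = (i - u.length) % (k - u.length) := by
        show u.length + (i - u.length) % (k - u.length) - u.length = _
        omega
      have h2 : (idx k ⟨u.length, hjk⟩ i - u.length) % v.length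
          = (i - u.length) % v.length := by
        rw [h1, hveq]
        exact Nat.mod_mod_of_dvd _ dvd_rfl
      simp only [h2]
  · intro h
    obtain ⟨j, hal⟩ : ∃ j : Fin k, ∀ (i : ℕ) (hi : i < w.length) (hki : k ≤ i),
        projL I w[i] = projL I (w[idx k j i]'((idx_lt k j i).trans_le
          (hki.trans hi.le))) := by
      rcases h with h | ⟨j, hal⟩
      · have hk0 : 0 < k := by omega
        exact ⟨⟨k - 1, by omega⟩, fun i hi hki => absurd hki (by omega)⟩
      · exact ⟨j, fun i hi hki => hal i hi hki⟩
    have hj2 := j.2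
    set W : ℕ → (I → Bool) :=
      fun n => if h : n < w.length then projL I w[n] else fun _ => false with hW
    set u := (List.range (j : ℕ)).map W with hu0
    set v := (List.range (k - (j : ℕ))).map (fun t => W ((j : ℕ) + t)) with hv0
    have hu : u.length = (j : ℕ) := by simp [hu0]
    have hvlen : v.length = k - (j : ℕ) := by simp [hv0]
    have hv : v ≠ [] := by
      apply List.ne_nil_of_length_pos
      rw [hvlen]; omega
    -- the lasso word agrees with W everywhere below w.length
    have hlw : ∀ (n : ℕ), n < w.length → lassoWord u v hv n = W n := by
      intro n hn
      unfold lassoWord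
      by_cases hnj : n < u.length
      · rw [dif_pos hnj]
        simp only [hu0, List.getElem_map, List.getElem_range]
      · rw [dif_neg hnj]
        rw [hu] at hnj
        simp only [hv0, List.getElem_map, List.getElem_range]
        rw [hu, hvlen]
        have hidx : (j : ℕ) + (n - (j : ℕ)) % (k - (j : ℕ)) = idx k j n := rfl
        rw [hidx]
        by_cases hnk : n < k
        · rw [idx_of_lt k j (by omega) hnk]
        · have hidxlt : idx k j n < w.length := (idx_lt k j n).trans_le (by omega)
          rw [hW]
          simp only [dif_pos hidxlt, dif_pos hn]
          exact (hal n hn (by omega)).symm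
    refine ⟨fun n ap => if h : n < w.length then w[n] ap
        else if h2 : ap ∈ I then lassoWord u v hv n ⟨ap, h2⟩ else false,
      ⟨u, v, hv, by rw [hu, hvlen]; omega, ?_⟩, ?_⟩
    · funext n ii
      show (if h : n < w.length then w[n] (ii : AP)
        else if h2 : (ii : AP) ∈ I then lassoWord u v hv n ⟨(ii : AP), h2⟩ else false)
          = lassoWord u v hv n ii
      by_cases hn : n < w.length
      · rw [dif_pos hn, hlw n hn]
        simp only [hW]
        rw [dif_pos hn]
        rfl
      · rw [dif_neg hn, dif_pos ii.2]
    · intro i hi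
      funext ap
      show w[i] ap = if h : i < w.length then w[i] ap else _
      rw [dif_pos hi]

end LangChar

theorem stmt4 {AP : Type*} [Fintype AP] (I : Set AP) [DecidablePred (· ∈ I)]
    (k : ℕ) :
    ∃ (Q : Type) (_ : Fintype Q) (Ak : DFA (AP → Bool) Q),
      Fintype.card Q ≤ (2 ^ Fintype.card I + 1) ^ k * (k + 1) ^ k ∧
      Ak.accepts = {w : List (AP → Bool) | ∃ σ ∈ LassoLangI I k, IsPrefixOf w σ} := by
  classical
  have hc : Fintype.card (↥I → Bool) = 2 ^ Fintype.card I := by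
    simp [Fintype.card_fun]
  let e : (↥I → Bool) ≃ Fin (2 ^ Fintype.card I) := Fintype.equivFinOfCardEq hc
  let p : (AP → Bool) → Fin (2 ^ Fintype.card I) := fun a => e (projL I a)
  refine ⟨(Fin k → Option (Fin (2 ^ Fintype.card I))) × (Fin k → Option (Fin k)),
    inferInstance, Stmt4Aux.M p k, ?_, ?_⟩
  · rw [Fintype.card_prod, Fintype.card_fun, Fintype.card_fun, Fintype.card_option,
      Fintype.card_option, Fintype.card_fin, Fintype.card_fin]
  · ext w
    rw [Stmt4Aux.mem_accepts_iff]
    change _ ↔ (∃ σ ∈ LassoLangI I k, IsPrefixOf w σ)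
    rw [lang_char I k w]
    constructor
    · rintro (h | ⟨j, hal⟩)
      · exact Or.inl h
      · exact Or.inr ⟨j, fun i hi hki => e.injective (hal i hi hki)⟩
    · rintro (h | ⟨j, hal⟩)
      · exact Or.inl h
      · exact Or.inr ⟨j, fun i hi hki => congrArg e (hal i hi hki)⟩
end

section
/- For every bound k ≥ 1, every finite set AP of atomic propositions, and every nonempty subset I ⊆ AP, every nondeterministic finite automaton N over the alphabet Σ = 2^AP whose accepted language is L = {w ∈ Σ* | ∃ σ ∈ L_k^I(Σ^ω), w < σ} has at least 2^(k−1) states. -/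
namespace Stmt5Aux

/-- `F` has period `p`. -/
def Per (F : ℕ → Bool) (p : ℕ) : Prop := ∀ n, F (n + p) = F n

lemma per_add_mul {F : ℕ → Bool} {p : ℕ} (h : Per F p) (t : ℕ) :
    ∀ n, F (n + p * t) = F n := by
  induction t with
  | zero => simp
  | succ t ih =>
    intro n
    have h1 : n + p * (t + 1) = (n + p * t) + p := by ring
    rw [h1, h (n + p * t), ih n]

lemma per_mod {F : ℕ → Bool} {p q : ℕ} (hp : Per F p) (hq : Per F q) : Per F (q % p) := by
  intro n
  have h1 : (n + q % p) + p * (q / p) = n + q := by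
    have := Nat.mod_add_div q p
    omega
  have h2 := per_add_mul hp (q / p) (n + q % p)
  rw [h1] at h2
  rw [← h2, hq n]

lemma per_gcd {F : ℕ → Bool} : ∀ p q, Per F p → Per F q → Per F (Nat.gcd p q) := by
  intro p
  induction p using Nat.strong_induction_on with
  | _ p ih =>
    intro q hp hq
    rcases Nat.eq_zero_or_pos p with h0 | h0
    · subst h0; simpa using hq
    · rw [Nat.gcd_rec]
      exact ih (q % p) (Nat.mod_lt _ h0) p (per_mod hp hq) hp

lemma per_reduce {F : ℕ → Bool} {k : ℕ} (h : Per F k) (n : ℕ) : F n = F (n % k) := by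
  have h1 := per_add_mul h (n / k) (n % k)
  have h2 : n % k + k * (n / k) = n := Nat.mod_add_div n k
  rw [h2] at h1
  exact h1

lemma mod_two_blocks {k x : ℕ} (hk : 0 < k) (h1 : k ≤ x) (h2 : x < 2 * k) : x % k = x - k := by
  rw [Nat.mod_eq_sub_mod h1, Nat.mod_eq_of_lt (by omega)]

lemma mod_three_blocks {k x : ℕ} (hk : 0 < k) (h1 : 2 * k ≤ x) (h2 : x < 3 * k) :
    x % k = x - 2 * k := by
  rw [Nat.mod_eq_sub_mod (by omega), mod_two_blocks hk (by omega) (by omega)]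
  omega

/-- The key combinatorial fact: two words of length `k = m+1` which agree except possibly
at the last position, and which have nontrivial cyclic periods `d` resp. `e`, must in fact
agree at the last position as well. -/
lemma key_contra {F G : ℕ → Bool} {k m d e : ℕ} (hk : k = m + 1)
    (hd0 : 0 < d) (hdk : d < k)
    (he0 : 0 < e) (hek : e < k)
    (hFd : Per F d) (hGe : Per G e)
    (hagree : ∀ n, n % k ≠ m → F n = G n) (hne : F m ≠ G m) : False := by
  have hk0 : 0 < k := by omega
  have hmod1 : ∀ c, 0 < c → c < k → (m + c) % k = c - 1 := by
    intro c hc0 hck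
    rw [mod_two_blocks hk0 (by omega) (by omega)]
    omega
  by_cases hde : d = e
  · have h1 : (m + d) % k ≠ m := by rw [hmod1 d hd0 hdk]; omega
    have h2 : F (m + d) = F m := hFd m
    have h3 : G (m + d) = G m := by rw [hde]; exact hGe m
    exact hne (by rw [← h2, hagree _ h1, h3])
  · have hX : F (m + e) = F m := by
      by_contra hXm
      have hXmem : ∀ n, F (n + e) ≠ F n → n % k = m ∨ (n + e) % k = m := by
        intro n hn
        by_contra hcon
        push_neg at hcon
        exact hn (by rw [hagree _ hcon.2, hagree _ hcon.1, hGe n])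
      -- shift by d: F((m+d)+e) ≠ F(m+d)
      have hXd : F ((m + d) + e) ≠ F (m + d) := by
        have e1 : F ((m + d) + e) = F (m + e) := by
          have h : (m + d) + e = (m + e) + d := by ring
          rw [h]; exact hFd (m + e)
        have e2 : F (m + d) = F m := hFd m
        rw [e1, e2]; exact hXm
      have hde1 : d + e = k := by
        rcases hXmem (m + d) hXd with h | h
        · rw [hmod1 d hd0 hdk] at h; omega
        · rw [show m + d + e = m + (d + e) by ring] at h
          rcases Nat.lt_or_ge (d + e) k with hlt | hge
          · rw [hmod1 (d + e) (by omega) hlt] at h; omega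
          · rcases Nat.eq_or_lt_of_le hge with heq | hgt
            · omega
            · rw [mod_three_blocks hk0 (by omega) (by omega)] at h
              omega
      -- shift by 2d
      have hXd2 : F ((m + 2 * d) + e) ≠ F (m + 2 * d) := by
        have e1 : F ((m + 2 * d) + e) = F (m + e) := by
          have h : (m + 2 * d) + e = ((m + e) + d) + d := by ring
          rw [h, hFd ((m + e) + d), hFd (m + e)]
        have e2 : F (m + 2 * d) = F m := by
          have h : m + 2 * d = (m + d) + d := by ring
          rw [h, hFd (m + d), hFd m]
        rw [e1, e2]; exact hXm
      rcases hXmem (m + 2 * d) hXd2 with h | h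
      · rcases Nat.lt_or_ge (2 * d) k with hlt | hge
        · rw [hmod1 (2 * d) (by omega) hlt] at h; omega
        · rcases Nat.eq_or_lt_of_le hge with heq | hgt
          · omega
          · rw [mod_three_blocks hk0 (by omega) (by omega)] at h
            omega
      · rw [show m + 2 * d + e = (m + d) + k by omega, Nat.add_mod_right,
          hmod1 d hd0 hdk] at h
        omega
    have h5 : (m + e) % k ≠ m := by rw [hmod1 e he0 hek]; omega
    exact hne (by rw [← hX, hagree _ h5, hGe m])

/-- Periodic pattern of period `m+1` whose first `m` letters are `g` and last is `b`. -/
def pat (m : ℕ) (g : Fin m → Bool) (b : Bool) : ℕ → Bool :=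
  fun n => if h : n % (m + 1) < m then g ⟨n % (m + 1), h⟩ else b

lemma pat_perk (m : ℕ) (g : Fin m → Bool) (b : Bool) : Per (pat m g b) (m + 1) := by
  intro n
  simp [pat, Nat.add_mod_right]

lemma pat_at_m (m : ℕ) (g : Fin m → Bool) (b : Bool) : pat m g b m = b := by
  have h : m % (m + 1) = m := Nat.mod_eq_of_lt (by omega)
  simp [pat, h]

lemma pat_lt (m : ℕ) (g : Fin m → Bool) (b : Bool) (n : ℕ) (hn : n < m) :
    pat m g b n = g ⟨n, hn⟩ := by
  have h : n % (m + 1) = n := Nat.mod_eq_of_lt (by omega)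
  simp [pat, h, hn]

lemma pat_agree (m : ℕ) (g : Fin m → Bool) (n : ℕ) (h : n % (m + 1) ≠ m) :
    pat m g false n = pat m g true n := by
  have h1 : n % (m + 1) < m + 1 := Nat.mod_lt _ (by omega)
  have h2 : n % (m + 1) < m := by omega
  simp [pat, h2]

/-- For every `g` there is a final letter `b` making the pattern aperiodic
(no nontrivial period below `m+1`). -/
lemma exists_prim (m : ℕ) (g : Fin m → Bool) :
    ∃ b, ∀ p, 0 < p → p < m + 1 → ¬ Per (pat m g b) p := by
  by_contra hcon
  push_neg at hcon
  obtain ⟨p, hp0, hpk, hPp⟩ := hcon false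
  obtain ⟨q, hq0, hqk, hPq⟩ := hcon true
  set d := Nat.gcd p (m + 1) with hd
  set e := Nat.gcd q (m + 1) with he
  have hFd : Per (pat m g false) d := per_gcd p (m + 1) hPp (pat_perk m g false)
  have hGe : Per (pat m g true) e := per_gcd q (m + 1) hPq (pat_perk m g true)
  have hd0 : 0 < d := Nat.gcd_pos_of_pos_left _ hp0
  have he0 : 0 < e := Nat.gcd_pos_of_pos_left _ hq0
  have hdp : d ≤ p := Nat.le_of_dvd hp0 (Nat.gcd_dvd_left _ _)
  have heq : e ≤ q := Nat.le_of_dvd hq0 (Nat.gcd_dvd_left _ _)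
  refine key_contra (F := pat m g false) (G := pat m g true) (k := m + 1) rfl
    hd0 (by omega) he0 (by omega) hFd hGe (pat_agree m g) ?_
  rw [pat_at_m, pat_at_m]
  simp

/-- NFA helper lemmas -/
lemma stepSet_mono {α Q : Type*} (N : NFA α Q) {S T : Set Q} (h : S ⊆ T) (a : α) :
    N.stepSet S a ⊆ N.stepSet T a := by
  intro q hq
  rw [NFA.mem_stepSet] at *
  obtain ⟨r, hr, h2⟩ := hq
  exact ⟨r, h hr, h2⟩

lemma evalFrom_mono {α Q : Type*} (N : NFA α Q) {S T : Set Q} (h : S ⊆ T) (x : List α) :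
    N.evalFrom S x ⊆ N.evalFrom T x := by
  induction x generalizing S T with
  | nil => simpa using h
  | cons a x ih =>
    show N.evalFrom (N.stepSet S a) x ⊆ N.evalFrom (N.stepSet T a) x
    exact ih (stepSet_mono N h a)

lemma evalFrom_append {α Q : Type*} (N : NFA α Q) (S : Set Q) (x y : List α) :
    N.evalFrom S (x ++ y) = N.evalFrom (N.evalFrom S x) y := by
  simp [NFA.evalFrom, List.foldl_append]

lemma evalFrom_split {α Q : Type*} (N : NFA α Q) {S : Set Q} {x : List α} {t : Q}
    (h : t ∈ N.evalFrom S x) : ∃ q ∈ S, t ∈ N.evalFrom {q} x := by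
  induction x generalizing S with
  | nil => exact ⟨t, h, by simp⟩
  | cons a x ih =>
    obtain ⟨r, hr, h2⟩ := ih (S := N.stepSet S a) h
    rw [NFA.mem_stepSet] at hr
    obtain ⟨q, hq, h3⟩ := hr
    refine ⟨q, hq, ?_⟩
    show t ∈ N.evalFrom (N.stepSet {q} a) x
    refine evalFrom_mono N ?_ x h2
    intro z hz
    rw [NFA.mem_stepSet]
    exact ⟨q, rfl, by rw [Set.mem_singleton_iff.mp hz]; exact h3⟩

/-- word of letters `fun _ => F (off + n)` for `n < len`. -/
def wordOf (AP : Type*) (F : ℕ → Bool) (off len : ℕ) : List (AP → Bool) :=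
  (List.range len).map (fun n => fun _ => F (off + n))

@[simp] lemma wordOf_length (AP : Type*) (F : ℕ → Bool) (off len : ℕ) :
    (wordOf AP F off len).length = len := by simp [wordOf]

lemma wordOf_get (AP : Type*) (F : ℕ → Bool) (off len i : ℕ) (h : i < (wordOf AP F off len).length) :
    (wordOf AP F off len)[i] = fun _ => F (off + i) := by
  simp [wordOf]

lemma wordOf_append (AP : Type*) (F : ℕ → Bool) (a bl : ℕ) :
    wordOf AP F 0 a ++ wordOf AP F a bl = wordOf AP F 0 (a + bl) := by
  simp only [wordOf, List.range_add, List.map_append, List.map_map]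
  congr 1
  apply List.map_congr_left
  intro n _
  simp [Function.comp]

/-- the constant-on-AP infinite word built from `F` lies in the lasso language, if `F` is
`k`-periodic. -/
lemma sigma_mem {AP : Type*} (I : Set AP) (k : ℕ) (hk : 0 < k) (F : ℕ → Bool)
    (hFk : Per F k) : (fun n (_ : AP) => F n) ∈ LassoLangI I k := by
  refine ⟨[], (List.range k).map (fun n => fun (_ : I) => F n), ?_, by simpa, ?_⟩
  · simp [List.range_eq_nil]; omega
  · funext n
    simp only [projI, lassoWord, List.length_nil, Nat.not_lt_zero, dite_false,
      List.length_map, List.length_range, Nat.sub_zero]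
    rw [List.getElem_map]
    simp only [List.getElem_range]
    funext i
    exact per_reduce hFk n

lemma sigma_prefix {AP : Type*} (F : ℕ → Bool) (L : ℕ) :
    IsPrefixOf (wordOf AP F 0 L) (fun n (_ : AP) => F n) := by
  intro i h
  rw [wordOf_get]
  simp

/-- The core combinatorial argument: if the concatenation of the first `k` letters of the
`Fg`-word with letters `k, …, 3k-1` of the `Fh`-word is a prefix of some lasso word of
length `k = m+1`, and `Fh` has no nontrivial period, then `Fg` and `Fh` agree on `[0, k)`. -/
lemma core {AP : Type*} (I : Set AP) (i0 : AP) (hi0 : i0 ∈ I) (m : ℕ)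
    (Fg Fh : ℕ → Bool) (hFhk : Per Fh (m + 1))
    (hprim : ∀ p, 0 < p → p < m + 1 → ¬ Per Fh p)
    (σ : ℕ → AP → Bool) (hσ : σ ∈ LassoLangI I (m + 1))
    (hpre : IsPrefixOf (wordOf AP Fg 0 (m + 1) ++ wordOf AP Fh (m + 1) (2 * (m + 1))) σ) :
    ∀ n < m + 1, Fg n = Fh n := by
  set k := m + 1 with hkdef
  have hk0 : 0 < k := by omega
  obtain ⟨u, v, hv, hlen, hproj⟩ := hσ
  set f : ℕ → Bool := fun n => σ n i0 with hf
  set j := u.length with hj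
  set p := v.length with hp
  have hp0 : 0 < p := List.length_pos_iff.mpr hv
  have hjp : j + p = k := hlen
  have hlen1 : (wordOf AP Fg 0 k ++ wordOf AP Fh k (2 * k)).length = 3 * k := by
    simp; omega
  have hf1 : ∀ n < k, f n = Fg n := by
    intro n hn
    have h1 := hpre n (by omega)
    rw [List.getElem_append_left (by simpa using hn)] at h1
    rw [wordOf_get] at h1
    simp only [Nat.zero_add] at h1
    exact (congrFun h1 i0).symm
  have hf2 : ∀ n, k ≤ n → n < 3 * k → f n = Fh n := by
    intro n hn1 hn2
    have h1 := hpre n (by omega)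
    rw [List.getElem_append_right (by simpa using hn1)] at h1
    rw [wordOf_get] at h1
    simp only [wordOf_length] at h1
    have h2 : k + (n - k) = n := by omega
    rw [h2] at h1
    exact (congrFun h1 i0).symm
  have hlasso : ∀ n, f n = (lassoWord u v hv n) ⟨i0, hi0⟩ := by
    intro n
    have := congrFun (congrFun hproj n) ⟨i0, hi0⟩
    exact this
  have hper : ∀ n, j ≤ n → f (n + p) = f n := by
    intro n hn
    rw [hlasso n, hlasso (n + p)]
    simp only [lassoWord]
    rw [dif_neg (by omega), dif_neg (by omega)]
    have hidx : (n + p - u.length) % v.length = (n - u.length) % v.length := by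
      have h3 : n + p - u.length = (n - u.length) + v.length := by
        have := hjp; omega
      rw [h3, Nat.add_mod_right]
    exact congrFun (getElem_congr_idx (c := v) hidx) ⟨i0, hi0⟩
  -- Fh is p-periodic
  have hFh_p : Per Fh p := by
    intro s
    have hs : s % k < k := Nat.mod_lt _ hk0
    have hpk : p ≤ k := by omega
    have h1 : f (k + s % k + p) = f (k + s % k) := hper (k + s % k) (by omega)
    have h2 : f (k + s % k) = Fh (k + s % k) := hf2 _ (by omega) (by omega)
    have h3 : f (k + s % k + p) = Fh (k + s % k + p) := hf2 _ (by omega) (by omega)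
    have h4 : Fh (k + s % k + p) = Fh (k + s % k) := by rw [← h2, ← h3, h1]
    have h5 : Fh (k + s % k + p) = Fh (s % k + p) := by
      rw [show k + s % k + p = (s % k + p) + k by ring]
      exact hFhk (s % k + p)
    have h6 : Fh (k + s % k) = Fh (s % k) := by
      rw [show k + s % k = s % k + k by ring]
      exact hFhk (s % k)
    have h7 : Fh (s + p) = Fh (s % k + p) := by
      have hd : s + p = (s % k + p) + k * (s / k) := by
        have := Nat.mod_add_div s k; omega
      rw [hd]
      exact per_add_mul hFhk (s / k) (s % k + p)
    rw [h7, h5.symm, h4, h6, ← per_reduce hFhk s]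
  have hpk : p = k := by
    by_contra hne
    exact hprim p hp0 (by omega) hFh_p
  have hj0 : j = 0 := by omega
  intro n hn
  have h1 : f (n + p) = f n := hper n (by omega)
  rw [hf1 n hn] at h1
  rw [hf2 (n + p) (by omega) (by omega)] at h1
  rw [← h1, hpk]
  exact hFhk n

end Stmt5Aux

open Stmt5Aux in
theorem stmt5 {AP : Type*} [Fintype AP] (I : Set AP) [DecidablePred (· ∈ I)]
    (hI : I.Nonempty) (k : ℕ) (hk : 1 ≤ k)
    (Q : Type*) [Fintype Q] (N : NFA (AP → Bool) Q)
    (hN : N.accepts = {w : List (AP → Bool) | ∃ σ ∈ LassoLangI I k, IsPrefixOf w σ}) :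
    2 ^ (k - 1) ≤ Fintype.card Q := by
  classical
  obtain ⟨i0, hi0⟩ := hI
  set m := k - 1 with hm
  have hk1 : k = m + 1 := by omega
  choose b hb using fun g : Fin m → Bool => exists_prim m g
  have hmem : ∀ g : Fin m → Bool,
      wordOf AP (pat m g (b g)) 0 (m + 1) ++ wordOf AP (pat m g (b g)) (m + 1) (2 * (m + 1))
        ∈ N.accepts := by
    intro g
    rw [hN]
    refine ⟨fun n _ => pat m g (b g) n, ?_, ?_⟩
    · rw [hk1]
      exact sigma_mem I (m + 1) (by omega) _ (pat_perk m g (b g))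
    · rw [wordOf_append]
      exact sigma_prefix _ _
  have hstep : ∀ g : Fin m → Bool, ∃ q,
      q ∈ N.evalFrom N.start (wordOf AP (pat m g (b g)) 0 (m + 1)) ∧
      ∃ t ∈ N.accept, t ∈ N.evalFrom {q} (wordOf AP (pat m g (b g)) (m + 1) (2 * (m + 1))) := by
    intro g
    obtain ⟨t, ht, hev⟩ := NFA.mem_accepts.mp (hmem g)
    rw [evalFrom_append] at hev
    obtain ⟨q, hq, h2⟩ := evalFrom_split N hev
    exact ⟨q, hq, t, ht, h2⟩
  choose Φ hΦ1 hΦ2 using hstep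
  have hinj : Function.Injective Φ := by
    intro g h hgh
    have hacc : wordOf AP (pat m g (b g)) 0 (m + 1) ++
        wordOf AP (pat m h (b h)) (m + 1) (2 * (m + 1)) ∈ N.accepts := by
      obtain ⟨t, ht, hev⟩ := hΦ2 h
      refine NFA.mem_accepts.mpr ⟨t, ht, ?_⟩
      rw [evalFrom_append]
      refine evalFrom_mono N ?_ _ hev
      intro z hz
      rw [Set.mem_singleton_iff.mp hz, ← hgh]
      exact hΦ1 g
    rw [hN] at hacc
    obtain ⟨σ, hσ, hpre⟩ := hacc
    have hcore := core I i0 hi0 m (pat m g (b g)) (pat m h (b h))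
      (pat_perk m h (b h)) (hb h) σ (by rw [← hk1]; exact hσ) hpre
    funext x
    have hx := hcore x.val (by omega)
    rw [pat_lt m g (b g) x.val x.isLt, pat_lt m h (b h) x.val x.isLt] at hx
    simpa using hx
  have hcard := Fintype.card_le_of_injective Φ hinj
  calc (2:ℕ) ^ (k - 1) = 2 ^ m := by rw [hm]
    _ = Fintype.card (Fin m → Bool) := by simp
    _ ≤ Fintype.card Q := hcard
end

section
/- Let A be an alphabet, a ∈ A a distinguished letter, and k ≥ 1. Let w₁ = w₁'·a and w₂ = w₂'·a be finite words of length k each, such that the letter a does not occur in w₁' and does not occur in w₂', and w₁ ≠ w₂. Then the concatenation w₁·w₂ is not a prefix of any infinite word representable by a lasso of length k; that is, there is no lasso (u,v) of length k with w₁·w₂ < u·v^ω. -/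
lemma lasso_periodic {A : Type*} (u v : List A) (hv : v ≠ []) (n : ℕ)
    (hn : u.length ≤ n) : lassoWord u v hv (n + v.length) = lassoWord u v hv n := by
  have hvpos : 0 < v.length := List.length_pos_iff.mpr hv
  unfold lassoWord
  rw [dif_neg (by omega), dif_neg (by omega)]
  congr 1
  have : n + v.length - u.length = (n - u.length) + v.length := by omega
  rw [this, Nat.add_mod_right]

theorem stmt8 {A : Type*} (a : A) (k : ℕ) (hk : 1 ≤ k) (w₁' w₂' : List A)
    (hlen₁ : (w₁' ++ [a]).length = k) (hlen₂ : (w₂' ++ [a]).length = k)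
    (ha₁ : a ∉ w₁') (ha₂ : a ∉ w₂') (hne : w₁' ++ [a] ≠ w₂' ++ [a]) :
    ¬ ∃ (u v : List A) (hv : v ≠ []),
        u.length + v.length = k ∧
        IsPrefixOf ((w₁' ++ [a]) ++ (w₂' ++ [a])) (lassoWord u v hv) := by
  rintro ⟨u, v, hv, hlen, hpre⟩
  have hL1 : (w₁' ++ [a]).length = k := hlen₁
  have hL2 : (w₂' ++ [a]).length = k := hlen₂
  simp only [List.length_append, List.length_singleton] at hlen₁ hlen₂
  have hvpos : 0 < v.length := List.length_pos_iff.mpr hv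
  set σ := lassoWord u v hv with hσ
  set m := v.length with hm
  have hW : ∀ i (h : i < 2 * k),
      ((w₁' ++ [a]) ++ (w₂' ++ [a]))[i]'(by simp; omega) = σ i := by
    intro i h
    exact hpre i (by simp; omega)
  -- σ(k-1) = a
  have h1 : σ (k - 1) = a := by
    have := hW (k - 1) (by omega)
    rw [← this, List.getElem_append_left (by omega)]
    have : k - 1 = w₁'.length := by omega
    simp [this]
  rcases Nat.lt_or_ge m k with hmk | hmk
  · -- m < k : a occurs in w₂' at position m-1
    have hper : σ (k - 1 + m) = σ (k - 1) := lasso_periodic u v hv _ (by omega)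
    have h2 := hW (k - 1 + m) (by omega)
    rw [hper, h1] at h2
    rw [List.getElem_append_right (by rw [hL1]; omega)] at h2
    have hidx : k - 1 + m - (w₁' ++ [a]).length = m - 1 := by rw [hL1]; omega
    simp only [hidx] at h2
    rw [List.getElem_append_left (by omega : m - 1 < w₂'.length)] at h2
    exact ha₂ (h2 ▸ List.getElem_mem _)
  · -- m = k : u = [], so w₁ = v = w₂
    have hmk' : m = k := by omega
    have hu : u.length = 0 := by omega
    have hval : ∀ n, σ n = v[n % m]'(Nat.mod_lt _ hvpos) := by
      intro n
      simp only [hσ, lassoWord, dif_neg (by omega : ¬ n < u.length)]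
      have : n - u.length = n := by omega
      simp only [this]
      rfl
    apply hne
    have e1 : w₁' ++ [a] = v := by
      apply List.ext_getElem (by omega)
      intro i h1' h2'
      have hik : i < k := by rwa [hL1] at h1'
      have := hW i (by omega)
      rw [List.getElem_append_left h1'] at this
      rw [this, hval i]
      congr 1
      exact Nat.mod_eq_of_lt (by omega)
    have e2 : w₂' ++ [a] = v := by
      apply List.ext_getElem (by omega)
      intro i h1' h2'
      have hik : i < k := by rwa [hL2] at h1'
      have := hW (k + i) (by omega)
      rw [List.getElem_append_right (by rw [hL1]; omega)] at this
      rw [hval (k + i)] at this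
      have hmod : (k + i) % m = i := by
        rw [hmk', Nat.add_mod_left]; exact Nat.mod_eq_of_lt hik
      have hidx : k + i - (w₁' ++ [a]).length = i := by rw [hL1]; omega
      simp only [hmod, hidx] at this
      exact this
    rw [e1, e2]
end
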